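/- arXiv:2601.07452 — 3 statements merged into one kernel-verified Lean document; each statement's English description precedes it below -/
import Mathlib

section
/- Let σ be a segmentation and φ an optimal pricing rule for σ. For each k ∈ {1,…,K} with m_k := ∑_{x ∈ supp σ} σ(x) φ_k(x) > 0, define x^k := (1/m_k) ∑_{x ∈ supp σ} σ(x) φ_k(x) · x. If a direct segmentation σ' supported on markets {y^k}_{k ∈ A} (with its direct pricing rule) induces the same joint distribution over valuations and prices as (σ, φ), then A = {k : m_k > 0}, and for every k ∈ A one has σ'(y^k) = m_k and y^k = x^k. Consequently, if the x^k (over k with m_k > 0) are not pairwise distinct, then no direct segmentation induces the same joint distribution over valuations and prices as (σ, φ). -/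
open Finset

/-- A market: a probability vector over the `K` valuations. -/
def IsMarket (K : ℕ) (x : Fin K → ℝ) : Prop :=
  (∀ j, 0 ≤ x j) ∧ ∑ j, x j = 1

/-- Revenue from charging price `v k` in market `x`. -/
def rev {K : ℕ} (v x : Fin K → ℝ) (k : Fin K) : ℝ :=
  v k * ∑ j ∈ Finset.Ici k, x j

/-- Price `v k` is optimal for market `x`. -/
def OptPrice {K : ℕ} (v x : Fin K → ℝ) (k : Fin K) : Prop :=
  ∀ i, rev v x i ≤ rev v x k

/-- A segmentation of the aggregate market `xstar`: a finitely supported probability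
distribution on markets averaging to `xstar`. -/
def IsSegmentation {K : ℕ} (xstar : Fin K → ℝ) (σ : (Fin K → ℝ) →₀ ℝ) : Prop :=
  (∀ x, 0 ≤ σ x) ∧ (∑ x ∈ σ.support, σ x = 1) ∧
  (∀ x ∈ σ.support, IsMarket K x) ∧
  (∑ x ∈ σ.support, σ x • x = xstar)

/-- A pricing rule assigns a probability vector over prices to each market in the support. -/
def IsPricingRule {K : ℕ} (σ : (Fin K → ℝ) →₀ ℝ) (φ : (Fin K → ℝ) → Fin K → ℝ) : Prop :=
  ∀ x ∈ σ.support, (∀ k, 0 ≤ φ x k) ∧ ∑ k, φ x k = 1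

/-- A pricing rule is optimal if it only charges optimal prices. -/
def IsOptimalPricing {K : ℕ} (v : Fin K → ℝ) (σ : (Fin K → ℝ) →₀ ℝ)
    (φ : (Fin K → ℝ) → Fin K → ℝ) : Prop :=
  ∀ x ∈ σ.support, ∀ k, 0 < φ x k → OptPrice v x k

/-- Consumer surplus of a segmentation and pricing rule. -/
def consumerSurplus {K : ℕ} (v : Fin K → ℝ) (σ : (Fin K → ℝ) →₀ ℝ)
    (φ : (Fin K → ℝ) → Fin K → ℝ) : ℝ :=
  ∑ x ∈ σ.support, σ x * ∑ k, φ x k * ∑ j ∈ Finset.Ici k, (v j - v k) * x j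

/-- Producer surplus of a segmentation and pricing rule. -/
def producerSurplus {K : ℕ} (v : Fin K → ℝ) (σ : (Fin K → ℝ) →₀ ℝ)
    (φ : (Fin K → ℝ) → Fin K → ℝ) : ℝ :=
  ∑ x ∈ σ.support, σ x * ∑ k, φ x k * (v k * ∑ j ∈ Finset.Ici k, x j)

/-- A direct segmentation: markets `xs k` for `k ∈ A`, pairwise distinct, with
`xs k ∈ X_k`, weights `w k > 0` summing to one and averaging to `xstar`. -/
def IsDirectSeg {K : ℕ} (v xstar : Fin K → ℝ) (A : Finset (Fin K))
    (xs : Fin K → Fin K → ℝ) (w : Fin K → ℝ) : Prop :=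
  Set.InjOn xs (A : Set (Fin K)) ∧
  (∀ k ∈ A, IsMarket K (xs k)) ∧
  (∀ k ∈ A, OptPrice v (xs k) k) ∧
  (∀ k ∈ A, 0 < w k) ∧
  (∑ k ∈ A, w k = 1) ∧
  (∑ k ∈ A, w k • xs k = xstar)

/-- Consumer surplus of a direct segmentation (with its direct pricing rule). -/
def directCS {K : ℕ} (v : Fin K → ℝ) (A : Finset (Fin K))
    (xs : Fin K → Fin K → ℝ) (w : Fin K → ℝ) : ℝ :=
  ∑ k ∈ A, w k * ∑ j ∈ Finset.Ici k, (v j - v k) * xs k j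

/-- Producer surplus of a direct segmentation (with its direct pricing rule). -/
def directPS {K : ℕ} (v : Fin K → ℝ) (A : Finset (Fin K))
    (xs : Fin K → Fin K → ℝ) (w : Fin K → ℝ) : ℝ :=
  ∑ k ∈ A, w k * (v k * ∑ j ∈ Finset.Ici k, xs k j)

/-- `x` is the characteristic market `x^S`: supported in `S`, and every price in `S`
yields the same revenue. -/
def IsCharMarket {K : ℕ} (v : Fin K → ℝ) (S : Finset (Fin K)) (x : Fin K → ℝ) : Prop :=
  IsMarket K x ∧ (∀ j ∉ S, x j = 0) ∧ ∀ i ∈ S, ∀ i' ∈ S, rev v x i = rev v x i'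

/-- The joint distribution over valuations and prices induced by `(σ, φ)`:
mass of the pair `(v j, v k)`. -/
def jointDist {K : ℕ} (σ : (Fin K → ℝ) →₀ ℝ) (φ : (Fin K → ℝ) → Fin K → ℝ)
    (j k : Fin K) : ℝ :=
  ∑ x ∈ σ.support, σ x * φ x k * x j

/-- The joint distribution over valuations and prices induced by a direct segmentation
with its direct pricing rule. -/
def directJoint {K : ℕ} (A : Finset (Fin K)) (xs : Fin K → Fin K → ℝ) (w : Fin K → ℝ)
    (j k : Fin K) : ℝ :=
  if k ∈ A then w k * xs k j else 0

/-- The total mass `m_k` of price `v k` under `(σ, φ)`. -/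
noncomputable def mass {K : ℕ} (σ : (Fin K → ℝ) →₀ ℝ) (φ : (Fin K → ℝ) → Fin K → ℝ)
    (k : Fin K) : ℝ :=
  ∑ x ∈ σ.support, σ x * φ x k

/-- The conditional market `x^k` given price `v k` under `(σ, φ)`. -/
noncomputable def condMarket {K : ℕ} (σ : (Fin K → ℝ) →₀ ℝ) (φ : (Fin K → ℝ) → Fin K → ℝ)
    (k : Fin K) : Fin K → ℝ :=
  (mass σ φ k)⁻¹ • ∑ x ∈ σ.support, (σ x * φ x k) • x

theorem stmt14 {K : ℕ} (hK : 2 ≤ K) (v : Fin K → ℝ)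
    (hv0 : ∀ k, 0 < v k) (hv : StrictMono v)
    (xstar : Fin K → ℝ) (hxstar : IsMarket K xstar) (hxpos : ∀ k, 0 < xstar k)
    (σ : (Fin K → ℝ) →₀ ℝ) (φ : (Fin K → ℝ) → Fin K → ℝ)
    (hσ : IsSegmentation xstar σ) (hφ : IsPricingRule σ φ)
    (hopt : IsOptimalPricing v σ φ) :
    (∀ (A : Finset (Fin K)) (ys : Fin K → Fin K → ℝ) (w : Fin K → ℝ),
        IsDirectSeg v xstar A ys w →
        (∀ j k, directJoint A ys w j k = jointDist σ φ j k) →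
        A = (Finset.univ.filter fun k => 0 < mass σ φ k) ∧
          ∀ k ∈ A, w k = mass σ φ k ∧ ys k = condMarket σ φ k) ∧
      (¬ Set.InjOn (condMarket σ φ) {k : Fin K | 0 < mass σ φ k} →
        ¬ ∃ (A : Finset (Fin K)) (ys : Fin K → Fin K → ℝ) (w : Fin K → ℝ),
            IsDirectSeg v xstar A ys w ∧
            ∀ j k, directJoint A ys w j k = jointDist σ φ j k) := by
  obtain ⟨hσ0, hσ1, hσm, hσavg⟩ := hσ
  have hsum : ∀ k, ∑ j, jointDist σ φ j k = mass σ φ k := by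
    intro k
    unfold jointDist mass
    rw [Finset.sum_comm]
    refine Finset.sum_congr rfl fun x hx => ?_
    rw [← Finset.mul_sum, (hσm x hx).2, mul_one]
  have hmain : ∀ (A : Finset (Fin K)) (ys : Fin K → Fin K → ℝ) (w : Fin K → ℝ),
      IsDirectSeg v xstar A ys w →
      (∀ j k, directJoint A ys w j k = jointDist σ φ j k) →
      A = (Finset.univ.filter fun k => 0 < mass σ φ k) ∧
        ∀ k ∈ A, w k = mass σ φ k ∧ ys k = condMarket σ φ k := by
    intro A ys w hds hj
    obtain ⟨hinj, hmk, hop, hwpos, hw1, havg⟩ := hds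
    have hwk : ∀ k ∈ A, w k = mass σ φ k := by
      intro k hk
      have h2 : ∑ j, directJoint A ys w j k = w k := by
        simp only [directJoint, hk, if_true, ← Finset.mul_sum]
        rw [(hmk k hk).2, mul_one]
      rw [← hsum k, ← h2]
      exact Finset.sum_congr rfl fun j _ => (hj j k).symm ▸ rfl
    have hjd : ∀ j k, directJoint A ys w j k = jointDist σ φ j k := hj
    constructor
    · ext k
      simp only [Finset.mem_filter, Finset.mem_univ, true_and]
      constructor
      · intro hk
        rw [← hwk k hk]; exact hwpos k hk
      · intro hm
        by_contra hk
        have h2 : ∑ j, directJoint A ys w j k = 0 := by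
          simp [directJoint, hk]
        rw [← hsum k] at hm
        have : (∑ j, jointDist σ φ j k) = 0 := by
          rw [← h2]; exact Finset.sum_congr rfl fun j _ => (hj j k).symm
        linarith
    · intro k hk
      have hmpos : 0 < mass σ φ k := hwk k hk ▸ hwpos k hk
      refine ⟨hwk k hk, ?_⟩
      funext j
      have hjk : w k * ys k j = jointDist σ φ j k := by
        have := hj j k
        simpa [directJoint, hk] using this
      have hcm : condMarket σ φ k j = (mass σ φ k)⁻¹ * jointDist σ φ j k := by
        unfold condMarket jointDist
        simp only [Pi.smul_apply, smul_eq_mul, Finset.sum_apply]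
      rw [hcm, ← hjk, hwk k hk, inv_mul_cancel_left₀ (ne_of_gt hmpos)]
  refine ⟨hmain, ?_⟩
  rintro hninj ⟨A, ys, w, hds, hj⟩
  obtain ⟨hA, hkey⟩ := hmain A ys w hds hj
  apply hninj
  intro a ha b hb hab
  have haA : a ∈ A := by rw [hA]; simp only [Finset.mem_filter, Finset.mem_univ, true_and]; exact ha
  have hbA : b ∈ A := by rw [hA]; simp only [Finset.mem_filter, Finset.mem_univ, true_and]; exact hb
  have hya := (hkey a haA).2
  have hyb := (hkey b hbA).2
  exact hds.1 haA hbA (by rw [hya, hyb, hab])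
end

section
/- For every optimal revised segmentation σ there exists a revised direct segmentation σ' that induces the same joint distribution over valuations and prices as σ; explicitly, σ' assigns to each k with total mass m_k := ∑_{(x,ℓ) ∈ supp σ, ℓ = k} σ(x,ℓ) > 0 the pair (x^k, k) with mass m_k, where x^k := (1/m_k) ∑_{(x,ℓ) ∈ supp σ, ℓ = k} σ(x,ℓ) · x. -/
open Finset

/-- A revised segmentation: a finitely supported probability distribution on pairs
`(x, k)` of a market and a price index, averaging to `xstar`. -/
def IsRevisedSeg {K : ℕ} (xstar : Fin K → ℝ) (σ : ((Fin K → ℝ) × Fin K) →₀ ℝ) : Prop :=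
  (∀ p, 0 ≤ σ p) ∧ (∑ p ∈ σ.support, σ p = 1) ∧
  (∀ p ∈ σ.support, IsMarket K p.1) ∧
  (∑ p ∈ σ.support, σ p • p.1 = xstar)

/-- A revised segmentation is optimal if in each segment `(x, k)` the charged price
`v k` is optimal for `x`. -/
def IsOptimalRevised {K : ℕ} (v : Fin K → ℝ) (σ : ((Fin K → ℝ) × Fin K) →₀ ℝ) : Prop :=
  ∀ p ∈ σ.support, OptPrice v p.1 p.2

/-- The joint distribution over valuations and prices induced by a revised
segmentation: mass of the pair `(v j, v k)`. -/
noncomputable def revisedJoint {K : ℕ} (σ : ((Fin K → ℝ) × Fin K) →₀ ℝ)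
    (j k : Fin K) : ℝ :=
  ∑ p ∈ σ.support.filter (fun p => p.2 = k), σ p * p.1 j

/-- Total mass `m_k` assigned to price `v k` by a revised segmentation. -/
noncomputable def revMass {K : ℕ} (σ : ((Fin K → ℝ) × Fin K) →₀ ℝ) (k : Fin K) : ℝ :=
  ∑ p ∈ σ.support.filter (fun p => p.2 = k), σ p

/-- The conditional market `x^k` given price `v k` under a revised segmentation. -/
noncomputable def revCondMarket {K : ℕ} (σ : ((Fin K → ℝ) × Fin K) →₀ ℝ)
    (k : Fin K) : Fin K → ℝ :=
  (revMass σ k)⁻¹ • ∑ p ∈ σ.support.filter (fun p => p.2 = k), σ p • p.1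

theorem stmt15 {K : ℕ} (hK : 2 ≤ K) (v : Fin K → ℝ)
    (hv0 : ∀ k, 0 < v k) (hv : StrictMono v)
    (xstar : Fin K → ℝ) (hxstar : IsMarket K xstar) (hxpos : ∀ k, 0 < xstar k)
    (σ : ((Fin K → ℝ) × Fin K) →₀ ℝ)
    (hσ : IsRevisedSeg xstar σ) (hoptσ : IsOptimalRevised v σ) :
    ∃ σ' : ((Fin K → ℝ) × Fin K) →₀ ℝ,
      IsRevisedSeg xstar σ' ∧ IsOptimalRevised v σ' ∧
      (∀ p ∈ σ'.support, ∀ q ∈ σ'.support, p.2 = q.2 → p = q) ∧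
      σ'.support = Finset.image (fun k => (revCondMarket σ k, k))
          (Finset.univ.filter fun k => 0 < revMass σ k) ∧
      (∀ k, 0 < revMass σ k → σ' (revCondMarket σ k, k) = revMass σ k) ∧
      (∀ j k, revisedJoint σ' j k = revisedJoint σ j k) := by
  classical
  obtain ⟨hnn, hsum1, hmkt, hbar⟩ := hσ
  set S : Fin K → Finset ((Fin K → ℝ) × Fin K) :=
    fun k => σ.support.filter (fun p => p.2 = k) with hS
  have hm_def : ∀ k, revMass σ k = ∑ p ∈ S k, σ p := fun k => rfl
  have hm_nn : ∀ k, 0 ≤ revMass σ k := by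
    intro k; rw [hm_def]; exact Finset.sum_nonneg fun p _ => hnn p
  have hpos : ∀ p ∈ σ.support, 0 < σ p := by
    intro p hp
    exact lt_of_le_of_ne (hnn p) (Ne.symm (Finsupp.mem_support_iff.mp hp))
  have hSempty : ∀ k, ¬ 0 < revMass σ k → S k = ∅ := by
    intro k hk
    by_contra hne
    obtain ⟨p, hp⟩ := Finset.nonempty_iff_ne_empty.mpr hne
    have hp' := Finset.mem_filter.mp hp
    have : 0 < revMass σ k := by
      rw [hm_def]
      exact Finset.sum_pos' (fun q hq => hnn q) ⟨p, hp, hpos p hp'.1⟩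
    exact hk this
  have hfiber : ∀ k, ∑ p ∈ S k, σ p • p.1 = revMass σ k • revCondMarket σ k := by
    intro k
    by_cases hk : 0 < revMass σ k
    · rw [revCondMarket, smul_smul, mul_inv_cancel₀ (ne_of_gt hk), one_smul]
    · rw [hSempty k hk, Finset.sum_empty]
      have : revMass σ k = 0 := le_antisymm (not_lt.mp hk) (hm_nn k)
      rw [this, zero_smul]
  have hfiberj : ∀ k j, ∑ p ∈ S k, σ p * p.1 j = revMass σ k * revCondMarket σ k j := by
    intro k j
    have := congrFun (hfiber k) j
    simpa [Finset.sum_apply, Pi.smul_apply, smul_eq_mul] using this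
  have hfw : ∀ (f : ((Fin K → ℝ) × Fin K) → ℝ),
      ∑ k : Fin K, ∑ p ∈ S k, f p = ∑ p ∈ σ.support, f p := by
    intro f
    exact Finset.sum_fiberwise σ.support (fun p => p.2) f
  have hfwv : ∀ (f : ((Fin K → ℝ) × Fin K) → (Fin K → ℝ)),
      ∑ k : Fin K, ∑ p ∈ S k, f p = ∑ p ∈ σ.support, f p := by
    intro f
    exact Finset.sum_fiberwise σ.support (fun p => p.2) f
  -- revenue of the conditional market
  have hrev : ∀ k, 0 < revMass σ k → ∀ i,
      revMass σ k * rev v (revCondMarket σ k) i = ∑ p ∈ S k, σ p * rev v p.1 i := by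
    intro k hk i
    have h1 : ∑ j ∈ Finset.Ici i, revCondMarket σ k j
        = (revMass σ k)⁻¹ * ∑ p ∈ S k, σ p * ∑ j ∈ Finset.Ici i, p.1 j := by
      rw [Finset.mul_sum]
      simp only [revCondMarket, Pi.smul_apply, Finset.sum_apply, smul_eq_mul,
        Finset.mul_sum]
      rw [Finset.sum_comm]
    calc revMass σ k * rev v (revCondMarket σ k) i
        = v i * ∑ p ∈ S k, σ p * ∑ j ∈ Finset.Ici i, p.1 j := by
          rw [rev, h1, ← mul_assoc, mul_comm (revMass σ k) (v i), mul_assoc,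
            ← mul_assoc (revMass σ k), mul_inv_cancel₀ (ne_of_gt hk), one_mul]
      _ = ∑ p ∈ S k, σ p * rev v p.1 i := by
          rw [Finset.mul_sum]
          exact Finset.sum_congr rfl fun p _ => by rw [rev]; ring
  -- the candidate support
  set A : Finset ((Fin K → ℝ) × Fin K) :=
    Finset.image (fun k => (revCondMarket σ k, k))
      (Finset.univ.filter fun k => 0 < revMass σ k) with hA
  have hmemA : ∀ p : ((Fin K → ℝ) × Fin K), p ∈ A ↔
      (0 < revMass σ p.2 ∧ p.1 = revCondMarket σ p.2) := by
    intro p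
    constructor
    · intro hp
      obtain ⟨k, hk, hkp⟩ := Finset.mem_image.mp hp
      have hk2 : p.2 = k := by rw [← hkp]
      have hk1 : p.1 = revCondMarket σ k := by rw [← hkp]
      subst hk2
      exact ⟨(Finset.mem_filter.mp hk).2, hk1⟩
    · rintro ⟨h1, h2⟩
      refine Finset.mem_image.mpr ⟨p.2, Finset.mem_filter.mpr ⟨Finset.mem_univ _, h1⟩, ?_⟩
      rw [← h2]
  have hms : ∀ p : ((Fin K → ℝ) × Fin K),
      p ∈ A ↔ (if p ∈ A then revMass σ p.2 else 0) ≠ 0 := by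
    intro p
    constructor
    · intro hp
      simp only [hp, if_true]
      exact ne_of_gt ((hmemA p).mp hp).1
    · intro hp
      by_contra h
      simp [h] at hp
  set σ' : ((Fin K → ℝ) × Fin K) →₀ ℝ :=
    ⟨A, fun p => if p ∈ A then revMass σ p.2 else 0, hms⟩ with hσ'def
  have hsupp : σ'.support = A := rfl
  have happ : ∀ p, σ' p = if p ∈ A then revMass σ p.2 else 0 := fun p => rfl
  have hval : ∀ k, 0 < revMass σ k → σ' (revCondMarket σ k, k) = revMass σ k := by
    intro k hk
    rw [happ, if_pos ((hmemA _).mpr ⟨hk, rfl⟩)]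
  -- sums over A reduce to sums over positive-mass k
  have hsumA : ∀ (g : ((Fin K → ℝ) × Fin K) → ℝ),
      ∑ p ∈ A, σ' p * g p = ∑ k : Fin K, revMass σ k * g (revCondMarket σ k, k) := by
    intro g
    rw [hA, Finset.sum_image]
    · rw [Finset.sum_filter]
      apply Finset.sum_congr rfl
      intro k _
      by_cases hk : 0 < revMass σ k
      · rw [if_pos hk, hval k hk]
      · rw [if_neg hk]
        have : revMass σ k = 0 := le_antisymm (not_lt.mp hk) (hm_nn k)
        rw [this, zero_mul]
    · intro a _ b _ hab
      exact (Prod.mk.injEq _ _ _ _ ▸ hab).2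
  have hsumAv : ∑ p ∈ A, σ' p • p.1 = ∑ k : Fin K, revMass σ k • revCondMarket σ k := by
    rw [hA, Finset.sum_image]
    · rw [Finset.sum_filter]
      apply Finset.sum_congr rfl
      intro k _
      by_cases hk : 0 < revMass σ k
      · rw [if_pos hk]
        simp only [hval k hk]
      · rw [if_neg hk]
        have : revMass σ k = 0 := le_antisymm (not_lt.mp hk) (hm_nn k)
        rw [this, zero_smul]
    · intro a _ b _ hab
      exact (Prod.mk.injEq _ _ _ _ ▸ hab).2
  -- conditional market is a market
  have hcm : ∀ k, 0 < revMass σ k → IsMarket K (revCondMarket σ k) := by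
    intro k hk
    constructor
    · intro j
      have h := hfiberj k j
      have hnum : 0 ≤ ∑ p ∈ S k, σ p * p.1 j := by
        apply Finset.sum_nonneg
        intro p hp
        have hp' := Finset.mem_filter.mp hp
        exact mul_nonneg (hnn p) ((hmkt p hp'.1).1 j)
      have : revCondMarket σ k j = (revMass σ k)⁻¹ * ∑ p ∈ S k, σ p * p.1 j := by
        rw [h]
        field_simp
      rw [this]
      exact mul_nonneg (inv_nonneg.mpr (hm_nn k)) hnum
    · have h : ∑ j, revMass σ k * revCondMarket σ k j = revMass σ k := by
        calc ∑ j, revMass σ k * revCondMarket σ k j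
            = ∑ j, ∑ p ∈ S k, σ p * p.1 j := by
              exact Finset.sum_congr rfl fun j _ => (hfiberj k j).symm
          _ = ∑ p ∈ S k, σ p * ∑ j, p.1 j := by
              rw [Finset.sum_comm]
              exact Finset.sum_congr rfl fun p _ => (Finset.mul_sum _ _ _).symm
          _ = ∑ p ∈ S k, σ p := by
              apply Finset.sum_congr rfl
              intro p hp
              have hp' := Finset.mem_filter.mp hp
              rw [(hmkt p hp'.1).2, mul_one]
          _ = revMass σ k := (hm_def k).symm
      have h2 : revMass σ k * ∑ j, revCondMarket σ k j = revMass σ k := by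
        rw [Finset.mul_sum]; exact h
      have h3 : revMass σ k * ∑ j, revCondMarket σ k j = revMass σ k * 1 := by
        rw [mul_one]; exact h2
      exact mul_left_cancel₀ (ne_of_gt hk) h3
  -- opt price for conditional market
  have hopt : ∀ k, 0 < revMass σ k → OptPrice v (revCondMarket σ k) k := by
    intro k hk i
    have h1 := hrev k hk i
    have h2 := hrev k hk k
    have hle : ∑ p ∈ S k, σ p * rev v p.1 i ≤ ∑ p ∈ S k, σ p * rev v p.1 k := by
      apply Finset.sum_le_sum
      intro p hp
      have hp' := Finset.mem_filter.mp hp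
      have := hoptσ p hp'.1 i
      rw [hp'.2] at this
      exact mul_le_mul_of_nonneg_left this (hnn p)
    have : revMass σ k * rev v (revCondMarket σ k) i
        ≤ revMass σ k * rev v (revCondMarket σ k) k := by
      rw [h1, h2]; exact hle
    exact le_of_mul_le_mul_left this hk
  refine ⟨σ', ⟨?_, ?_, ?_, ?_⟩, ?_, ?_, hsupp, hval, ?_⟩
  · -- nonneg
    intro p
    rw [happ]
    split
    · exact hm_nn p.2
    · exact le_refl 0
  · -- sums to one
    rw [hsupp]
    calc ∑ p ∈ A, σ' p = ∑ p ∈ A, σ' p * 1 := by simp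
      _ = ∑ k : Fin K, revMass σ k * 1 := hsumA _
      _ = ∑ k : Fin K, ∑ p ∈ S k, σ p := by
          simp only [mul_one]
          exact Finset.sum_congr rfl fun k _ => hm_def k
      _ = 1 := by rw [hfw]; exact hsum1
  · -- markets
    intro p hp
    rw [hsupp] at hp
    obtain ⟨h1, h2⟩ := (hmemA p).mp hp
    rw [h2]
    exact hcm p.2 h1
  · -- barycenter
    rw [hsupp, hsumAv]
    calc ∑ k : Fin K, revMass σ k • revCondMarket σ k
        = ∑ k : Fin K, ∑ p ∈ S k, σ p • p.1 :=
          Finset.sum_congr rfl fun k _ => (hfiber k).symm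
      _ = ∑ p ∈ σ.support, σ p • p.1 := hfwv _
      _ = xstar := hbar
  · -- optimal
    intro p hp
    rw [hsupp] at hp
    obtain ⟨h1, h2⟩ := (hmemA p).mp hp
    rw [h2]
    exact hopt p.2 h1
  · -- uniqueness per price
    intro p hp q hq hpq
    rw [hsupp] at hp hq
    have h1 := ((hmemA p).mp hp).2
    have h2 := ((hmemA q).mp hq).2
    obtain ⟨p1, p2⟩ := p
    obtain ⟨q1, q2⟩ := q
    simp only at hpq h1 h2
    subst hpq
    rw [h1, h2]
  · -- joint distribution
    intro j k
    have hfilter : σ'.support.filter (fun p => p.2 = k)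
        = if 0 < revMass σ k then {(revCondMarket σ k, k)} else ∅ := by
      rw [hsupp]
      ext p
      by_cases hk : 0 < revMass σ k
      · simp only [if_pos hk, Finset.mem_filter, Finset.mem_singleton, hmemA]
        constructor
        · rintro ⟨⟨ha, hb⟩, hc⟩
          obtain ⟨p1, p2⟩ := p
          simp only at ha hb hc
          subst hc
          rw [Prod.mk.injEq]
          exact ⟨hb, rfl⟩
        · rintro rfl
          exact ⟨⟨hk, rfl⟩, rfl⟩
      · simp only [if_neg hk, Finset.notMem_empty, iff_false, Finset.mem_filter, hmemA]
        rintro ⟨⟨ha, _⟩, hc⟩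
        rw [hc] at ha
        exact hk ha
    rw [revisedJoint, revisedJoint, hfilter]
    by_cases hk : 0 < revMass σ k
    · rw [if_pos hk, Finset.sum_singleton, hval k hk]
      rw [hfiberj k j]
    · rw [if_neg hk, Finset.sum_empty]
      have h0 : σ.support.filter (fun p => p.2 = k) = ∅ := hSempty k hk
      rw [h0, Finset.sum_empty]
end

section
/- For every nonempty subset S ⊆ {1,…,K} there exists a unique market x such that x_j = 0 for all j ∉ S and v_i ∑_{j=i}^K x_j = v_{i'} ∑_{j=i'}^K x_j for all i, i' ∈ S. -/
open Finset

section aux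
variable {K : ℕ}

/-- elements of `S` with value at least `n`. -/
def Fn (S : Finset (Fin K)) (n : ℕ) : Finset (Fin K) := S.filter (fun i => n ≤ (i : ℕ))

/-- the intended tail sum from index `n`. -/
noncomputable def gT (v : Fin K → ℝ) (S : Finset (Fin K)) (a : Fin K) (n : ℕ) : ℝ :=
  if h : (Fn S n).Nonempty then v a / v ((Fn S n).min' h) else 0

/-- tail sum of a vector starting at `n`. -/
def Tn (y : Fin K → ℝ) (n : ℕ) : ℝ := ∑ j ∈ univ.filter (fun j : Fin K => n ≤ (j : ℕ)), y j

lemma Ici_eq_filter (k : Fin K) :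
    Finset.Ici k = univ.filter (fun j : Fin K => (k : ℕ) ≤ (j : ℕ)) := by
  ext j
  simp only [Finset.mem_Ici, mem_filter, mem_univ, true_and]
  exact Fin.le_def

lemma Tn_zero (y : Fin K → ℝ) : Tn y 0 = ∑ j, y j := by
  simp [Tn]

lemma Tn_succ (y : Fin K → ℝ) (j : Fin K) :
    Tn y (j : ℕ) = Tn y ((j : ℕ) + 1) + y j := by
  classical
  have h1 : (univ.filter (fun i : Fin K => (j : ℕ) ≤ (i : ℕ)))
      = (univ.filter (fun i : Fin K => (j : ℕ) + 1 ≤ (i : ℕ))) ∪ {j} := by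
    ext i
    simp only [mem_filter, mem_univ, true_and, mem_union, mem_singleton]
    constructor
    · intro h
      rcases eq_or_lt_of_le h with h' | h'
      · right; exact Fin.ext h'.symm
      · left; omega
    · rintro (h | rfl) <;> omega
  have h2 : Disjoint (univ.filter (fun i : Fin K => (j : ℕ) + 1 ≤ (i : ℕ)))
      ({j} : Finset (Fin K)) := by
    simp [Finset.disjoint_singleton_right]
  rw [Tn, h1, Finset.sum_union h2]
  simp [Tn]

/-- tail sums only change at elements of the support. -/
lemma Tn_skip (y : Fin K → ℝ) (S : Finset (Fin K)) (hy : ∀ j ∉ S, y j = 0)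
    {m n : ℕ} (hmn : m ≤ n) (hgap : ∀ i ∈ S, m ≤ (i : ℕ) → n ≤ (i : ℕ)) :
    Tn y m = Tn y n := by
  classical
  rw [Tn, Tn]
  refine (Finset.sum_subset ?_ ?_).symm
  · intro i hi; simp only [mem_filter, mem_univ, true_and] at hi ⊢; omega
  · intro i hi hni
    simp only [mem_filter, mem_univ, true_and] at hi hni
    by_cases hiS : i ∈ S
    · exact absurd (hgap i hiS hi) hni
    · exact hy i hiS

lemma gT_nonneg (v : Fin K → ℝ) (hv0 : ∀ k, 0 < v k) (S : Finset (Fin K)) (a : Fin K) (n : ℕ) :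
    0 ≤ gT v S a n := by
  rw [gT]; split
  · exact div_nonneg (hv0 a).le (hv0 _).le
  · exact le_refl 0

lemma gT_anti (v : Fin K → ℝ) (hv0 : ∀ k, 0 < v k) (hv : StrictMono v)
    (S : Finset (Fin K)) (a : Fin K) {m n : ℕ} (hmn : m ≤ n) :
    gT v S a n ≤ gT v S a m := by
  by_cases h : (Fn S n).Nonempty
  · have hsub : Fn S n ⊆ Fn S m := by
      intro i hi; simp only [Fn, mem_filter] at hi ⊢; exact ⟨hi.1, le_trans hmn hi.2⟩
    have h' : (Fn S m).Nonempty := h.mono hsub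
    rw [gT, gT, dif_pos h, dif_pos h']
    have hle : (Fn S m).min' h' ≤ (Fn S n).min' h :=
      Finset.min'_le _ _ (hsub ((Fn S n).min'_mem h))
    exact div_le_div_of_nonneg_left (hv0 a).le (hv0 _) (hv.monotone hle)
  · rw [gT, dif_neg h]
    exact gT_nonneg v hv0 S a m

lemma gT_mem (v : Fin K → ℝ) (S : Finset (Fin K)) (a : Fin K) {i : Fin K} (hi : i ∈ S) :
    gT v S a (i : ℕ) = v a / v i := by
  have h : (Fn S (i : ℕ)).Nonempty := ⟨i, by simp [Fn, hi]⟩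
  rw [gT, dif_pos h]
  congr 2
  refine le_antisymm (Finset.min'_le _ _ (by simp [Fn, hi])) ?_
  have := (Fn S (i:ℕ)).min'_mem h
  simp only [Fn, mem_filter] at this
  exact Fin.le_def.mpr this.2

/-- the key uniqueness lemma: any solution has tail sums `gT`. -/
lemma Tn_eq_gT (v : Fin K → ℝ) (hv0 : ∀ k, 0 < v k)
    (S : Finset (Fin K)) (hS : S.Nonempty) (y : Fin K → ℝ)
    (hsum : ∑ j, y j = 1) (hy0 : ∀ j ∉ S, y j = 0)
    (hrev : ∀ i ∈ S, ∀ i' ∈ S, rev v y i = rev v y i') (n : ℕ) :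
    Tn y n = gT v S (S.min' hS) n := by
  classical
  set a := S.min' hS with ha
  have haS : a ∈ S := S.min'_mem hS
  have hTa : Tn y (a : ℕ) = 1 := by
    rw [← Tn_skip y S hy0 (Nat.zero_le _) (fun i hi _ => Fin.le_def.mp (S.min'_le i hi)),
      Tn_zero, hsum]
  by_cases h : (Fn S n).Nonempty
  · set b := (Fn S n).min' h with hb
    have hbmem := (Fn S n).min'_mem h
    rw [← hb] at hbmem
    simp only [Fn, mem_filter] at hbmem
    obtain ⟨hbS, hnb⟩ := hbmem
    have h1 : Tn y n = Tn y (b : ℕ) := by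
      refine Tn_skip y S hy0 hnb ?_
      intro i hi hni
      have : b ≤ i := Finset.min'_le _ _ (by simp [Fn, hi, hni])
      exact Fin.le_def.mp this
    have h2 : v b * Tn y (b : ℕ) = v a * 1 := by
      have := hrev b hbS a haS
      rw [rev, rev, Ici_eq_filter, Ici_eq_filter, ← Tn, ← Tn] at this
      rw [this, hTa]
    have h3 : Tn y (b : ℕ) = v a / v b := by
      rw [eq_div_iff (hv0 b).ne', mul_comm]
      simpa using h2
    rw [h1, h3, gT, dif_pos h, ← hb]
  · rw [gT, dif_neg h, Tn]
    refine Finset.sum_eq_zero fun i hi => ?_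
    simp only [mem_filter, mem_univ, true_and] at hi
    refine hy0 i fun hiS => h ⟨i, ?_⟩
    simp [Fn, hiS, hi]

end aux

theorem stmt16 {K : ℕ} (hK : 2 ≤ K) (v : Fin K → ℝ)
    (hv0 : ∀ k, 0 < v k) (hv : StrictMono v)
    (S : Finset (Fin K)) (hS : S.Nonempty) :
    ∃! x : Fin K → ℝ, IsMarket K x ∧ (∀ j ∉ S, x j = 0) ∧
      ∀ i ∈ S, ∀ i' ∈ S, rev v x i = rev v x i' := by
  classical
  set a := S.min' hS with ha
  set g : ℕ → ℝ := gT v S a with hg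
  set x : Fin K → ℝ := fun j => g (j : ℕ) - g ((j : ℕ) + 1) with hx
  have hgK : g K = 0 := by
    rw [hg, gT, dif_neg]
    rintro ⟨i, hi⟩
    simp only [Fn, mem_filter] at hi
    omega
  -- tail sums of x are given by g
  have hTx : ∀ n : ℕ, n ≤ K → Tn x n = g n := by
    intro n hn
    have h1 : Tn x n = ∑ m ∈ Finset.Ico n K, (g m - g (m + 1)) := by
      rw [Tn, Finset.sum_filter, Fin.sum_univ_eq_sum_range
        (fun m => if n ≤ m then g m - g (m + 1) else 0)]
      rw [← Finset.sum_filter]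
      apply Finset.sum_congr
      · ext m
        simp only [Finset.mem_filter, Finset.mem_range, Finset.mem_Ico]
        omega
      · intros; rfl
    rw [h1, Finset.sum_Ico_eq_sub _ hn, Finset.sum_range_sub' g, Finset.sum_range_sub' g]
    rw [hgK]; ring
  have hTx' : ∀ j : Fin K, Tn x (j : ℕ) = g (j : ℕ) := fun j => hTx _ (le_of_lt j.isLt)
  have hFn0 : Fn S 0 = S := by
    rw [Fn, Finset.filter_true_of_mem]; intro i _; exact Nat.zero_le _
  have hg0 : g 0 = 1 := by
    rw [hg, gT]
    rw [dif_pos (by rw [hFn0]; exact hS)]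
    have h2 : (Fn S 0).min' (by rw [hFn0]; exact hS) = a := by
      simp_rw [hFn0]; rfl
    rw [h2, div_self (hv0 a).ne']
  have hxnn : ∀ j, 0 ≤ x j := by
    intro j
    have := gT_anti v hv0 hv S a (Nat.le_succ (j : ℕ))
    simpa [hx] using this
  have hxsum : ∑ j, x j = 1 := by
    rw [← Tn_zero, hTx 0 (by omega), hg0]
  have hxS : ∀ j ∉ S, x j = 0 := by
    intro j hj
    have hFn : Fn S (j : ℕ) = Fn S ((j : ℕ) + 1) := by
      ext i
      simp only [Fn, mem_filter, and_congr_right_iff]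
      intro hiS
      constructor
      · intro hle
        rcases Nat.eq_or_lt_of_le hle with h' | h'
        · exact absurd ((Fin.ext h' : j = i) ▸ hiS : j ∈ S) hj
        · omega
      · omega
    show g (j : ℕ) - g ((j : ℕ) + 1) = 0
    rw [hg, gT, gT, hFn]; ring
  have hrevx : ∀ i ∈ S, rev v x i = v a := by
    intro i hiS
    rw [rev, Ici_eq_filter, ← Tn, hTx' i, hg, gT_mem v S a hiS,
      mul_div_cancel₀ _ (hv0 i).ne']
  refine ⟨x, ⟨⟨hxnn, hxsum⟩, hxS, fun i hi i' hi' => by rw [hrevx i hi, hrevx i' hi']⟩, ?_⟩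
  rintro y ⟨⟨hynn, hysum⟩, hyS, hyrev⟩
  funext j
  have h1 : y j = Tn y (j : ℕ) - Tn y ((j : ℕ) + 1) := by
    have := Tn_succ y j; linarith
  rw [h1, Tn_eq_gT v hv0 S hS y hysum hyS hyrev, Tn_eq_gT v hv0 S hS y hysum hyS hyrev]
end
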